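/- The graph Γ^s(k,q), whose vertices are q-ary simplex codes of dimension k in F_q^n (n = (q^k-1)/(q-1)) with two codes adjacent when their intersection has dimension k-1, is connected. -/

import Mathlib

open Module Submodule

/-- A `q`-ary simplex code of dimension `k`: a `k`-dimensional subspace of `F^n`
whose coordinate functional restrictions are nonzero and pairwise non-proportional. -/
def IsSimplexCode {F : Type*} [Field F] {n : ℕ} (k : ℕ)
    (C : Submodule F (Fin n → F)) : Prop :=
  Module.finrank F ↥C = k ∧
  (∀ i : Fin n, ∃ c ∈ C, c i ≠ 0) ∧
  (∀ i j : Fin n, i ≠ j → ∀ a : F, ∃ c ∈ C, c j ≠ a * c i)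
/-- The graph of simplex codes: vertices are `q`-ary simplex codes of dimension `k`,
adjacent when their intersection is `(k-1)`-dimensional. -/
def simplexGraph (F : Type*) [Field F] (n k : ℕ) :
    SimpleGraph {C : Submodule F (Fin n → F) // IsSimplexCode k C} where
  Adj C C' := C ≠ C' ∧ Module.finrank F ↥(C.1 ⊓ C'.1) = k - 1
  symm := by
    constructor
    intro C C' h
    exact ⟨h.1.symm, by rw [inf_comm]; exact h.2⟩
  loopless := by
    constructor
    intro C h
    exact h.1 rfl

namespace SimplexAux
variable {F : Type*} [Field F] {n k : ℕ}

/-! ### Dot-product functionals and generator maps -/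

noncomputable def dotL (w : Fin k → F) : (Fin k → F) →ₗ[F] F :=
  ∑ l, w l • LinearMap.proj l

theorem dotL_apply (w u : Fin k → F) : dotL w u = ∑ l, w l * u l := by
  simp [dotL]

theorem dotL_single (w : Fin k → F) (l : Fin k) : dotL w (Pi.single l 1) = w l := by
  rw [dotL_apply, Finset.sum_eq_single l] <;>
    simp (config := {contextual := true}) [Pi.single_apply]

theorem single_dotL (u : Fin k → F) (l : Fin k) : dotL (Pi.single l 1) u = u l := by
  rw [dotL_apply, Finset.sum_eq_single l] <;>
    simp (config := {contextual := true}) [Pi.single_apply]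

theorem dotL_smul (c : F) (w u : Fin k → F) : dotL (c • w) u = c * dotL w u := by
  simp [dotL_apply, Finset.mul_sum, mul_assoc]

theorem dotL_sub (w w' u : Fin k → F) : dotL (w - w') u = dotL w u - dotL w' u := by
  simp [dotL_apply, sub_mul, Finset.sum_sub_distrib]

theorem dotL_zero (u : Fin k → F) : dotL (0 : Fin k → F) u = 0 := by simp [dotL_apply]

theorem dotL_ne_zero {w : Fin k → F} (hw : w ≠ 0) : dotL w ≠ 0 := by
  intro h
  apply hw
  funext l
  have := congrArg (fun f => (f : (Fin k → F) →ₗ[F] F) (Pi.single l 1)) h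
  simpa [dotL_single] using this

noncomputable def genMap (w : Fin n → Fin k → F) : (Fin k → F) →ₗ[F] (Fin n → F) :=
  LinearMap.pi (fun i => dotL (w i))

theorem genMap_apply (w : Fin n → Fin k → F) (u : Fin k → F) (i : Fin n) :
    genMap w u i = dotL (w i) u := rfl

noncomputable def theCode (w : Fin n → Fin k → F) : Submodule F (Fin n → F) :=
  LinearMap.range (genMap w)

/-- `w` covers every projective class. -/
def Covers (w : Fin n → Fin k → F) : Prop :=
  ∀ v : Fin k → F, v ≠ 0 → ∃ i, ∃ c : F, c ≠ 0 ∧ v = c • w i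

/-! ### Counting projective classes -/

variable (F k) in
def propSetoid : Setoid {v : Fin k → F // v ≠ 0} where
  r v u := ∃ c : F, c ≠ 0 ∧ u.1 = c • v.1
  iseqv := ⟨fun v => ⟨1, one_ne_zero, (one_smul _ _).symm⟩,
    fun {v u} h => by
      obtain ⟨c, hc, h⟩ := h
      exact ⟨c⁻¹, inv_ne_zero hc, by rw [h, smul_smul, inv_mul_cancel₀ hc, one_smul]⟩,
    fun {v u t} h h' => by
      obtain ⟨c, hc, h⟩ := h
      obtain ⟨d, hd, h'⟩ := h'
      exact ⟨d * c, mul_ne_zero hd hc, by rw [h', h, smul_smul]⟩⟩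

variable (F k) in
def PClass := Quotient (propSetoid F k)

def pcl (v : Fin k → F) (hv : v ≠ 0) : PClass F k := Quotient.mk _ ⟨v, hv⟩

theorem pcl_eq_iff {v u : Fin k → F} (hv : v ≠ 0) (hu : u ≠ 0) :
    pcl v hv = pcl u hu ↔ ∃ c : F, c ≠ 0 ∧ u = c • v :=
  ⟨fun h => Quotient.exact h, fun h => Quotient.sound h⟩

noncomputable instance [Fintype F] : Fintype (PClass F k) := by
  classical exact Quotient.fintype _

theorem card_pclass [Fintype F] {q : ℕ} (hq : Fintype.card F = q)
    (hn : n * (q - 1) = q ^ k - 1) : Fintype.card (PClass F k) = n := by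
  classical
  have hq2 : 2 ≤ q := hq ▸ Fintype.one_lt_card
  have h1 : Fintype.card {v : Fin k → F // v ≠ 0} = q ^ k - 1 := by
    have := Fintype.card_subtype_compl (fun v : Fin k → F => v = 0)
    rw [Fintype.card_subtype_eq (0 : Fin k → F), Fintype.card_fun, hq, Fintype.card_fin] at this
    simpa using this
  have h2 : Fintype.card {v : Fin k → F // v ≠ 0}
      = ∑ x : PClass F k,
        Fintype.card {v : {v : Fin k → F // v ≠ 0} // Quotient.mk (propSetoid F k) v = x} := by
    rw [← Fintype.card_sigma]
    exact Fintype.card_congr (Equiv.sigmaFiberEquiv _).symm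
  have h3 : ∀ x : PClass F k,
      Fintype.card {v : {v : Fin k → F // v ≠ 0} // Quotient.mk (propSetoid F k) v = x}
        = q - 1 := by
    intro x
    set r := Quotient.out x with hr
    have hfr : Function.Bijective (fun c : Fˣ =>
        (⟨⟨(c : F) • r.1, smul_ne_zero c.ne_zero r.2⟩, by
          rw [← Quotient.out_eq x]
          exact (Quotient.sound (show (propSetoid F k).r r
            ⟨(c : F) • r.1, smul_ne_zero c.ne_zero r.2⟩ from
              ⟨(c : F), c.ne_zero, rfl⟩)).symm⟩ :
          {v : {v : Fin k → F // v ≠ 0} // Quotient.mk (propSetoid F k) v = x})) := by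
      constructor
      · intro c d hcd
        have := congrArg (fun z => z.1.1) hcd
        exact Units.ext (smul_left_injective F r.2 this)
      · rintro ⟨⟨v, hv⟩, hx⟩
        have hrel : (propSetoid F k).r r ⟨v, hv⟩ :=
          Quotient.exact ((Quotient.out_eq x).trans hx.symm)
        obtain ⟨c, hc, hvc⟩ := hrel
        exact ⟨Units.mk0 c hc, by ext : 2; exact hvc.symm⟩
    rw [← Fintype.card_of_bijective hfr, Fintype.card_units, hq]
  have h4 : q ^ k - 1 = Fintype.card (PClass F k) * (q - 1) := by
    rw [← h1, h2]
    simp [h3, Finset.sum_const, mul_comm]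
  rw [← hn] at h4
  have hq1 : 0 < q - 1 := by omega
  exact (Nat.eq_of_mul_eq_mul_right hq1 h4).symm

theorem cover [Fintype F] {q : ℕ} (hq : Fintype.card F = q)
    (hn : n * (q - 1) = q ^ k - 1) {w : Fin n → Fin k → F}
    (wnz : ∀ i, w i ≠ 0) (hgood : ∀ i j, i ≠ j → ∀ a : F, w j ≠ a • w i) :
    Covers w := by
  intro v hv
  have hinj : Function.Injective (fun i : Fin n => pcl (w i) (wnz i)) := by
    intro i j hij
    by_contra hne
    obtain ⟨c, hc, hcw⟩ := (pcl_eq_iff _ _).1 hij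
    exact hgood i j hne c hcw
  have hbij : Function.Bijective (fun i : Fin n => pcl (w i) (wnz i)) := by
    rw [Fintype.bijective_iff_injective_and_card, Fintype.card_fin, card_pclass hq hn]
    exact ⟨hinj, rfl⟩
  obtain ⟨i, hi⟩ := hbij.2 (pcl v hv)
  obtain ⟨c, hc, hvc⟩ := (pcl_eq_iff _ _).1 hi
  exact ⟨i, c, hc, hvc⟩

/-! ### Codes from generators -/

theorem genMap_injective {w : Fin n → Fin k → F} (hcov : Covers w) :
    Function.Injective (genMap w) := by
  rw [← LinearMap.ker_eq_bot, LinearMap.ker_eq_bot']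
  intro u hu
  by_contra hne
  obtain ⟨l, hl⟩ : ∃ l, u l ≠ 0 := by
    by_contra h; push_neg at h; exact hne (funext h)
  obtain ⟨i, c, hc, hci⟩ := hcov (Pi.single l 1) (by
    intro h0
    have := congrFun h0 l
    simp at this)
  have h1 : dotL (Pi.single l 1) u = u l := single_dotL u l
  rw [hci, dotL_smul, ← genMap_apply, hu] at h1
  simp at h1
  exact hl h1.symm

theorem simplex_of {w : Fin n → Fin k → F} (wnz : ∀ i, w i ≠ 0)
    (hgood : ∀ i j, i ≠ j → ∀ a : F, w j ≠ a • w i) (hcov : Covers w) :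
    IsSimplexCode k (theCode w) := by
  refine ⟨?_, ?_, ?_⟩
  · rw [theCode, LinearMap.finrank_range_of_inj (genMap_injective hcov),
      Module.finrank_fin_fun]
  · intro i
    obtain ⟨l, hl⟩ : ∃ l, w i l ≠ 0 := by
      by_contra h; push_neg at h; exact wnz i (funext h)
    exact ⟨genMap w (Pi.single l 1), ⟨_, rfl⟩, by rw [genMap_apply, dotL_single]; exact hl⟩
  · intro i j hij a
    obtain ⟨l, hl⟩ : ∃ l, w j l ≠ a * w i l := by
      by_contra h; push_neg at h
      exact hgood i j hij a (funext h)
    exact ⟨genMap w (Pi.single l 1), ⟨_, rfl⟩, by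
      rw [genMap_apply, genMap_apply, dotL_single, dotL_single]; exact hl⟩

theorem exists_w {C : Submodule F (Fin n → F)} (hC : IsSimplexCode k C) :
    ∃ w : Fin n → Fin k → F, (∀ i, w i ≠ 0) ∧
      (∀ i j, i ≠ j → ∀ a : F, w j ≠ a • w i) ∧ theCode w = C := by
  haveI : FiniteDimensional F C := FiniteDimensional.finiteDimensional_submodule C
  let b : Basis (Fin k) F C := Module.finBasisOfFinrankEq F C hC.1
  let φ : (Fin k → F) →ₗ[F] (Fin n → F) :=
    C.subtype ∘ₗ (b.equivFun.symm : (Fin k → F) ≃ₗ[F] C).toLinearMap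
  have hφ : genMap (fun i l => φ (Pi.single l 1) i) = φ := by
    apply LinearMap.ext
    intro u
    funext i
    rw [genMap_apply, dotL_apply]
    have hu : u = ∑ l, u l • (Pi.single l 1 : Fin k → F) := by
      funext m
      simp [Finset.sum_apply, Pi.single_apply]
    conv_rhs => rw [hu, map_sum]
    simp [Finset.sum_apply, mul_comm]
  have hrange : LinearMap.range φ = C := by
    rw [LinearMap.range_comp, LinearEquiv.range, Submodule.map_top, Submodule.range_subtype]
  refine ⟨fun i l => φ (Pi.single l 1) i, ?_, ?_, ?_⟩
  · intro i h0
    obtain ⟨c, hc, hci⟩ := hC.2.1 i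
    rw [← hrange] at hc
    obtain ⟨u, rfl⟩ := hc
    apply hci
    have h1 : φ u i = dotL (fun l => φ (Pi.single l 1) i) u :=
      (congrFun (LinearMap.congr_fun hφ u) i).symm
    rw [h1, show (fun l => φ (Pi.single l 1) i) = 0 from h0, dotL_zero]
  · intro i j hij a heq
    obtain ⟨c, hc, hcj⟩ := hC.2.2 i j hij a
    rw [← hrange] at hc
    obtain ⟨u, rfl⟩ := hc
    apply hcj
    have h1 : φ u j = dotL (fun l => φ (Pi.single l 1) j) u :=
      (congrFun (LinearMap.congr_fun hφ u) j).symm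
    have h2 : φ u i = dotL (fun l => φ (Pi.single l 1) i) u :=
      (congrFun (LinearMap.congr_fun hφ u) i).symm
    have heq' : (fun l => φ (Pi.single l 1) j) = a • (fun l => φ (Pi.single l 1) i) := heq
    rw [h1, h2, heq', dotL_smul]
  · rw [theCode, hφ, hrange]

/-! ### The basic reachability criterion -/

theorem reach_of_agree (hk : 2 ≤ k) {w w' : Fin n → Fin k → F}
    (hw : IsSimplexCode k (theCode w)) (hw' : IsSimplexCode k (theCode w'))
    (hcov : Covers w) {h : Fin k → F} (hh : h ≠ 0)
    (agree : ∀ u, dotL h u = 0 → genMap w u = genMap w' u) :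
    (simplexGraph F n k).Reachable ⟨theCode w, hw⟩ ⟨theCode w', hw'⟩ := by
  by_cases hCC : theCode w = theCode w'
  · rw [show (⟨theCode w, hw⟩ : {C : Submodule F (Fin n → F) // IsSimplexCode k C})
      = ⟨theCode w', hw'⟩ from Subtype.ext hCC]
  · apply SimpleGraph.Adj.reachable
    refine ⟨fun hEq => hCC (congrArg Subtype.val hEq), ?_⟩
    have hinj := genMap_injective hcov
    set W := Submodule.map (genMap w) (LinearMap.ker (dotL h)) with hWdef
    have hWc : W ≤ theCode w := by
      rintro x ⟨u, hu, rfl⟩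
      exact ⟨u, rfl⟩
    have hWc' : W ≤ theCode w' := by
      rintro x ⟨u, hu, rfl⟩
      exact ⟨u, (agree u hu).symm⟩
    have hker : finrank F (LinearMap.ker (dotL h)) = k - 1 := by
      have hrk := LinearMap.finrank_range_add_finrank_ker (dotL h)
      rw [Module.finrank_fin_fun] at hrk
      have hr1 : finrank F (LinearMap.range (dotL h)) = 1 := by
        have hle : finrank F (LinearMap.range (dotL h)) ≤ 1 := by
          simpa using Submodule.finrank_le (LinearMap.range (dotL h))
        have hne : finrank F (LinearMap.range (dotL h)) ≠ 0 := by
          rw [Ne, Submodule.finrank_eq_zero, LinearMap.range_eq_bot]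
          exact dotL_ne_zero hh
        omega
      omega
    have hW : finrank F W = k - 1 := by
      rw [← hker]
      exact (LinearEquiv.finrank_eq
        (Submodule.equivMapOfInjective (genMap w) hinj (LinearMap.ker (dotL h)))).symm
    have h1 : k - 1 ≤ finrank F ↥(theCode w ⊓ theCode w') := by
      rw [← hW]; exact Submodule.finrank_mono (le_inf hWc hWc')
    have h2 : finrank F ↥(theCode w ⊓ theCode w') ≤ k :=
      le_trans (Submodule.finrank_mono inf_le_left) (le_of_eq hw.1)
    have h3 : finrank F ↥(theCode w ⊓ theCode w') ≠ k := by
      intro hk'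
      apply hCC
      have e1 : theCode w ⊓ theCode w' = theCode w :=
        Submodule.eq_of_le_of_finrank_eq inf_le_left (hk'.trans hw.1.symm)
      have hle' : theCode w ≤ theCode w' := by rw [← e1]; exact inf_le_right
      exact Submodule.eq_of_le_of_finrank_eq hle' (hw.1.trans hw'.1.symm)
    simp only [simplexGraph]
    omega

/-! ### Phase 2: adjusting scalings -/

open scoped Classical in
theorem reach2 (hk : 2 ≤ k) (w' : Fin n → Fin k → F)
    (hw' : IsSimplexCode k (theCode w')) :
    ∀ N : ℕ, ∀ w : Fin n → Fin k → F, ∀ (wnz : ∀ i, w i ≠ 0),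
    (∀ i j, i ≠ j → ∀ a : F, w j ≠ a • w i) → ∀ (hcov : Covers w)
    (hw : IsSimplexCode k (theCode w)),
    (∀ i, ∃ c : F, c ≠ 0 ∧ w' i = c • w i) →
    (Finset.univ.filter fun i => w i ≠ w' i).card ≤ N →
    (simplexGraph F n k).Reachable ⟨theCode w, hw⟩ ⟨theCode w', hw'⟩ := by
  intro N
  induction N with
  | zero =>
    intro w wnz hgood hcov hw hprop hcard
    have hemp : (Finset.univ.filter fun i => w i ≠ w' i) = ∅ :=
      Finset.card_eq_zero.1 (Nat.le_zero.1 hcard)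
    have hww : w = w' := by
      funext i
      by_contra hne
      have hmem : i ∈ Finset.univ.filter fun i => w i ≠ w' i :=
        Finset.mem_filter.2 ⟨Finset.mem_univ i, hne⟩
      rw [hemp] at hmem
      exact absurd hmem (Finset.notMem_empty i)
    rw [show (⟨theCode w, hw⟩ : {C : Submodule F (Fin n → F) // IsSimplexCode k C})
      = ⟨theCode w', hw'⟩ from Subtype.ext (congrArg theCode hww)]
  | succ N ih =>
    intro w wnz hgood hcov hw hprop hcard
    by_cases hww : w = w'
    · rw [show (⟨theCode w, hw⟩ : {C : Submodule F (Fin n → F) // IsSimplexCode k C})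
        = ⟨theCode w', hw'⟩ from Subtype.ext (congrArg theCode hww)]
    · obtain ⟨i, hi⟩ := Function.ne_iff.1 hww
      obtain ⟨c, hc, hci⟩ := hprop i
      set w2 : Fin n → Fin k → F := Function.update w i (c • w i) with hw2def
      have hw2s : w2 i = c • w i := by rw [hw2def, Function.update_self]
      have hw2i : w2 i = w' i := by rw [hw2s]; exact hci.symm
      have hw2m : ∀ m, m ≠ i → w2 m = w m := fun m hm => Function.update_of_ne hm _ _
      have wnz2 : ∀ l, w2 l ≠ 0 := by
        intro l
        rcases eq_or_ne l i with rfl | hl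
        · rw [hw2s]; exact smul_ne_zero hc (wnz l)
        · rw [hw2m l hl]; exact wnz l
      have hgood2 : ∀ l m, l ≠ m → ∀ a : F, w2 m ≠ a • w2 l := by
        intro l m hlm a
        rcases eq_or_ne m i with rfl | hm
        · have hli : l ≠ m := hlm
          rw [hw2s, hw2m l hli]
          intro heq
          have hwi : w m = (c⁻¹ * a) • w l := by
            rw [mul_smul, ← heq, smul_smul, inv_mul_cancel₀ hc, one_smul]
          exact hgood l m hli _ hwi
        · rcases eq_or_ne l i with rfl | hl
          · rw [hw2s, hw2m m hm, smul_smul]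
            exact hgood l m hlm (a * c)
          · rw [hw2m m hm, hw2m l hl]
            exact hgood l m hlm a
      have hcov2 : Covers w2 := by
        intro v hv
        obtain ⟨l, d, hd, hvd⟩ := hcov v hv
        rcases eq_or_ne l i with rfl | hl
        · refine ⟨l, d * c⁻¹, mul_ne_zero hd (inv_ne_zero hc), ?_⟩
          rw [hw2s, smul_smul, mul_assoc, inv_mul_cancel₀ hc, mul_one]
          exact hvd
        · exact ⟨l, d, hd, by rw [hw2m l hl]; exact hvd⟩
      have hw2c : IsSimplexCode k (theCode w2) := simplex_of wnz2 hgood2 hcov2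
      have agree : ∀ u, dotL (w i) u = 0 → genMap w u = genMap w2 u := by
        intro u hu
        funext m
        rw [genMap_apply, genMap_apply]
        rcases eq_or_ne m i with rfl | hm
        · rw [hw2s, dotL_smul, hu, mul_zero]
        · rw [hw2m m hm]
      have step := reach_of_agree hk hw hw2c hcov (wnz i) agree
      refine step.trans (ih w2 wnz2 hgood2 hcov2 hw2c ?_ ?_)
      · intro l
        rcases eq_or_ne l i with rfl | hl
        · exact ⟨1, one_ne_zero, by rw [hw2i, one_smul]⟩
        · rw [hw2m l hl]; exact hprop l
      · have hiM : i ∈ Finset.univ.filter fun m => w m ≠ w' m :=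
          Finset.mem_filter.2 ⟨Finset.mem_univ i, hi⟩
        have hsub : (Finset.univ.filter fun m => w2 m ≠ w' m)
            ⊆ (Finset.univ.filter fun m => w m ≠ w' m).erase i := by
          intro m hm
          rw [Finset.mem_filter] at hm
          have hmi : m ≠ i := by
            rintro rfl
            exact hm.2 hw2i
          refine Finset.mem_erase.2 ⟨hmi, Finset.mem_filter.2 ⟨Finset.mem_univ m, ?_⟩⟩
          rw [← hw2m m hmi]
          exact hm.2
        have hcle := Finset.card_le_card hsub
        rw [Finset.card_erase_of_mem hiM] at hcle
        omega

/-! ### Phase 1: matching projective classes -/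

open scoped Classical in
theorem reach1 (hk : 2 ≤ k) (w' : Fin n → Fin k → F)
    (wnz' : ∀ i, w' i ≠ 0) (hgood' : ∀ i j, i ≠ j → ∀ a : F, w' j ≠ a • w' i)
    (hw' : IsSimplexCode k (theCode w')) :
    ∀ N : ℕ, ∀ w : Fin n → Fin k → F, ∀ (wnz : ∀ i, w i ≠ 0),
    (∀ i j, i ≠ j → ∀ a : F, w j ≠ a • w i) → ∀ (hcov : Covers w)
    (hw : IsSimplexCode k (theCode w)),
    (Finset.univ.filter fun i => ¬ ∃ c : F, c ≠ 0 ∧ w' i = c • w i).card ≤ N →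
    (simplexGraph F n k).Reachable ⟨theCode w, hw⟩ ⟨theCode w', hw'⟩ := by
  intro N
  induction N with
  | zero =>
    intro w wnz hgood hcov hw hcard
    have hemp : (Finset.univ.filter fun i => ¬ ∃ c : F, c ≠ 0 ∧ w' i = c • w i) = ∅ :=
      Finset.card_eq_zero.1 (Nat.le_zero.1 hcard)
    have hprop : ∀ i, ∃ c : F, c ≠ 0 ∧ w' i = c • w i := by
      intro i
      by_contra hne
      have hmem : i ∈ Finset.univ.filter fun i => ¬ ∃ c : F, c ≠ 0 ∧ w' i = c • w i :=
        Finset.mem_filter.2 ⟨Finset.mem_univ i, hne⟩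
      rw [hemp] at hmem
      exact absurd hmem (Finset.notMem_empty i)
    exact reach2 hk w' hw' _ w wnz hgood hcov hw hprop le_rfl
  | succ N ih =>
    intro w wnz hgood hcov hw hcard
    by_cases hM : (Finset.univ.filter fun i => ¬ ∃ c : F, c ≠ 0 ∧ w' i = c • w i) = ∅
    · have hprop : ∀ i, ∃ c : F, c ≠ 0 ∧ w' i = c • w i := by
        intro i
        by_contra hne
        have hmem : i ∈ Finset.univ.filter fun i => ¬ ∃ c : F, c ≠ 0 ∧ w' i = c • w i :=
          Finset.mem_filter.2 ⟨Finset.mem_univ i, hne⟩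
        rw [hM] at hmem
        exact absurd hmem (Finset.notMem_empty i)
      exact reach2 hk w' hw' _ w wnz hgood hcov hw hprop le_rfl
    · obtain ⟨i, hiM⟩ := Finset.nonempty_iff_ne_empty.2 hM
      have hi : ¬ ∃ c : F, c ≠ 0 ∧ w' i = c • w i := (Finset.mem_filter.1 hiM).2
      obtain ⟨j, c0, hc0, hij'⟩ := hcov (w' i) (wnz' i)
      have hji : j ≠ i := by
        rintro rfl
        exact hi ⟨c0, hc0, hij'⟩
      set w2 : Fin n → Fin k → F := fun l => w (Equiv.swap i j l) with hw2def
      have hw2i : w2 i = w j := by rw [hw2def]; simp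
      have hw2j : w2 j = w i := by rw [hw2def]; simp
      have hw2m : ∀ m, m ≠ i → m ≠ j → w2 m = w m := by
        intro m h1 h2
        rw [hw2def]
        simp [Equiv.swap_apply_of_ne_of_ne h1 h2]
      have wnz2 : ∀ l, w2 l ≠ 0 := fun l => wnz _
      have hgood2 : ∀ l m, l ≠ m → ∀ a : F, w2 m ≠ a • w2 l := by
        intro l m hlm a
        exact hgood _ _ ((Equiv.swap i j).injective.ne hlm) a
      have hcov2 : Covers w2 := by
        intro v hv
        obtain ⟨l, d, hd, hvd⟩ := hcov v hv
        refine ⟨Equiv.swap i j l, d, hd, ?_⟩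
        rw [hw2def]
        simpa using hvd
      have hw2c : IsSimplexCode k (theCode w2) := simplex_of wnz2 hgood2 hcov2
      have hdiff : w i - w j ≠ 0 := by
        rw [sub_ne_zero]
        intro heq
        exact hgood j i hji 1 (by rw [one_smul]; exact heq)
      have agree : ∀ u, dotL (w i - w j) u = 0 → genMap w u = genMap w2 u := by
        intro u hu
        rw [dotL_sub] at hu
        have h4 : dotL (w i) u = dotL (w j) u := sub_eq_zero.mp hu
        funext m
        rw [genMap_apply, genMap_apply]
        rcases eq_or_ne m i with rfl | hmi
        · rw [hw2i]; exact h4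
        · rcases eq_or_ne m j with rfl | hmj
          · rw [hw2j]; exact h4.symm
          · rw [hw2m m hmi hmj]
      have step := reach_of_agree hk hw hw2c hcov hdiff agree
      refine step.trans (ih w2 wnz2 hgood2 hcov2 hw2c ?_)
      have hsub : (Finset.univ.filter fun m => ¬ ∃ c : F, c ≠ 0 ∧ w' m = c • w2 m)
          ⊆ (Finset.univ.filter fun m => ¬ ∃ c : F, c ≠ 0 ∧ w' m = c • w m).erase i := by
        intro m hm
        have hm2 : ¬ ∃ c : F, c ≠ 0 ∧ w' m = c • w2 m := (Finset.mem_filter.1 hm).2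
        have hmi : m ≠ i := by
          rintro rfl
          exact hm2 ⟨c0, hc0, by rw [hw2i]; exact hij'⟩
        refine Finset.mem_erase.2 ⟨hmi, Finset.mem_filter.2 ⟨Finset.mem_univ m, ?_⟩⟩
        rcases eq_or_ne m j with rfl | hmj
        · rintro ⟨d, hd, hdj⟩
          apply hgood' m i hji (c0 * d⁻¹)
          calc w' i = c0 • w m := hij'
            _ = (c0 * d⁻¹) • w' m := by
                rw [hdj, smul_smul, mul_assoc, inv_mul_cancel₀ hd, mul_one]
        · rw [← hw2m m hmi hmj]
          exact hm2
      have hcle := Finset.card_le_card hsub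
      rw [Finset.card_erase_of_mem hiM] at hcle
      omega

end SimplexAux

open SimplexAux

theorem simplexGraph_connected {F : Type*} [Field F] [Fintype F]
    {q n k : ℕ} (hq : Fintype.card F = q) (hk : 2 ≤ k)
    (hn : n * (q - 1) = q ^ k - 1) :
    (simplexGraph F n k).Connected := by
  classical
  have hcardQ : Fintype.card (PClass F k) = n := card_pclass hq hn
  let e : PClass F k ≃ Fin n := Fintype.equivFinOfCardEq hcardQ
  let w0 : Fin n → Fin k → F := fun i => ((e.symm i).out).1
  have wnz0 : ∀ i, w0 i ≠ 0 := fun i => ((e.symm i).out).2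
  have key : ∀ i, pcl (w0 i) (wnz0 i) = e.symm i := fun i => Quotient.out_eq (e.symm i)
  have hgood0 : ∀ i j, i ≠ j → ∀ a : F, w0 j ≠ a • w0 i := by
    intro i j hij a heq
    have ha : a ≠ 0 := by
      rintro rfl
      rw [zero_smul] at heq
      exact wnz0 j heq
    have h2 : pcl (w0 i) (wnz0 i) = pcl (w0 j) (wnz0 j) :=
      (pcl_eq_iff _ _).2 ⟨a, ha, heq⟩
    rw [key, key] at h2
    exact hij (e.symm.injective h2)
  have hcov0 : Covers w0 := by
    intro v hv
    refine ⟨e (pcl v hv), ?_⟩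
    have h2 : pcl (w0 (e (pcl v hv))) (wnz0 _) = pcl v hv := by
      rw [key]
      exact e.symm_apply_apply _
    exact (pcl_eq_iff _ _).1 h2
  haveI : Nonempty {C : Submodule F (Fin n → F) // IsSimplexCode k C} :=
    ⟨⟨theCode w0, simplex_of wnz0 hgood0 hcov0⟩⟩
  refine ⟨fun A B => ?_⟩
  obtain ⟨w, wnz, hgood, hcode⟩ := exists_w A.2
  obtain ⟨w', wnz', hgood', hcode'⟩ := exists_w B.2
  have hcov : Covers w := cover hq hn wnz hgood
  have hcov' : Covers w' := cover hq hn wnz' hgood'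
  have hA : A = ⟨theCode w, simplex_of wnz hgood hcov⟩ := Subtype.ext hcode.symm
  have hB : B = ⟨theCode w', simplex_of wnz' hgood' hcov'⟩ := Subtype.ext hcode'.symm
  rw [hA, hB]
  exact reach1 hk w' wnz' hgood' (simplex_of wnz' hgood' hcov') _ w wnz hgood hcov
    (simplex_of wnz hgood hcov) le_rfl
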